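/- Let ψ: Z × Θ × H₁ × H₂ → ℝ^d define moments M(θ, η₁) = P[ψ(Z; θ, η₁(Z, θ₁'), η₂*(Z))]. Suppose M is Fréchet differentiable at (θ*, η₁*(·, θ₁*)) with derivative decomposing as J*(θ − θ*) + D[η₁′ − η₁*(·, θ₁*)] plus errors o(‖θ − θ*‖) + o(‖η₁′ − η₁*(·, θ₁*)‖_{L²(P)}), where D is a bounded linear operator. If on a neighborhood N of (θ*, η₁*(·, θ₁*)) we have D[η₁′(·, θ₁′) − η₁*(·, θ₁*)] = 0 for all (θ, η₁′(·, θ₁′)) ∈ N, and ‖η₁*(·, θ₁′) − η₁*(·, θ₁*)‖_{L²(P)} ≤ C‖θ₁′ − θ₁*‖, then the partial derivative in θ of θ ↦ P[ψ(Z; θ, η₁*(Z, θ₁), η₂*(Z))] at θ = θ* equals J* = ∂_θ P[ψ(Z; θ, η₁*(Z, θ₁*), η₂*(Z))]|_{θ=θ*}; that is, the Jacobian with the nuisance frozen at θ₁* coincides with the Jacobian of the fully θ-dependent moment. -/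

import Mathlib

open Filter

/-- If the joint moment map `G(θ, η₁)` is Fréchet differentiable at
`(θ*, η₁*(·, θ₁*))` with derivative `J*(θ − θ*) + D[η₁′ − η₁*(·, θ₁*)]`, the bounded linear
operator `D` vanishes on (differences from) a neighborhood of `η₁*(·, θ₁*)`, and the true
nuisance path `θ ↦ η₁*(·, θ₁)` is Lipschitz in L²(P) (abstracted here as the normed space `H`),
then the θ-derivative of the fully θ-dependent moment `θ ↦ G(θ, η₁*(·, θ₁))` at `θ*` equals
`J*`, the Jacobian with the nuisance frozen at `θ₁*`. -/
theorem stmt_0 {E H : Type*} [NormedAddCommGroup E] [NormedSpace ℝ E]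
    [NormedAddCommGroup H] [NormedSpace ℝ H]
    (G : E × H → E) (θstar : E) (η : E → H)
    (Jstar : E →L[ℝ] E) (D : H →L[ℝ] E) (C : ℝ)
    -- Fréchet differentiability of the joint moment map at (θ*, η₁*(·, θ₁*))
    (hdiff : HasFDerivAt G
      (Jstar.comp (ContinuousLinearMap.fst ℝ E H) + D.comp (ContinuousLinearMap.snd ℝ E H))
      (θstar, η θstar))
    -- orthogonality: D kills nuisance perturbations within a neighborhood N
    (N : Set H) (hN : N ∈ nhds (η θstar))
    (horth : ∀ h ∈ N, D (h - η θstar) = 0)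
    -- Lipschitz continuity of the true nuisance path in the L²(P) norm
    (hLip : ∀ θ, ‖η θ - η θstar‖ ≤ C * ‖θ - θstar‖) :
    HasFDerivAt (fun θ => G (θ, η θ)) Jstar θstar ∧
    HasFDerivAt (fun θ => G (θ, η θstar)) Jstar θstar := by
  have h2 : Tendsto η (nhds θstar) (nhds (η θstar)) := by
    rw [tendsto_iff_norm_sub_tendsto_zero]
    have hbound : Tendsto (fun θ : E => C * ‖θ - θstar‖) (nhds θstar) (nhds 0) := by
      have : Tendsto (fun θ : E => C * ‖θ - θstar‖) (nhds θstar)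
          (nhds (C * ‖θstar - θstar‖)) :=
        tendsto_const_nhds.mul ((tendsto_id.sub tendsto_const_nhds).norm)
      simpa using this
    exact squeeze_zero (fun θ => norm_nonneg _) hLip hbound
  have hcont : Tendsto (fun θ => ((θ, η θ) : E × H)) (nhds θstar) (nhds (θstar, η θstar)) := by
    rw [nhds_prod_eq]
    exact tendsto_id.prodMk h2
  set L := Jstar.comp (ContinuousLinearMap.fst ℝ E H) +
    D.comp (ContinuousLinearMap.snd ℝ E H) with hL
  have key : HasFDerivAt (fun θ => G (θ, η θ)) Jstar θstar := by
    refine HasFDerivAt.of_isLittleO ?_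
    have ho := hdiff.isLittleO.comp_tendsto hcont
    have hbig : (fun θ : E => ((θ, η θ) : E × H) - (θstar, η θstar))
        =O[nhds θstar] (fun θ : E => θ - θstar) := by
      rw [Asymptotics.isBigO_iff]
      refine ⟨1 + |C|, Filter.Eventually.of_forall fun θ => ?_⟩
      have h1 : ‖((θ, η θ) : E × H) - (θstar, η θstar)‖
          = max ‖θ - θstar‖ ‖η θ - η θstar‖ := by
        rw [Prod.norm_def]; simp
      rw [h1]
      have h3 := hLip θ
      have hC : C * ‖θ - θstar‖ ≤ (1 + |C|) * ‖θ - θstar‖ := by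
        apply mul_le_mul_of_nonneg_right _ (norm_nonneg _)
        have := le_abs_self C
        linarith
      refine max_le ?_ (le_trans h3 hC)
      nlinarith [norm_nonneg (θ - θstar), abs_nonneg C]
    have ho2 := ho.trans_isBigO hbig
    have hev : ∀ᶠ θ in nhds θstar, η θ ∈ N := h2.eventually_mem hN
    refine ho2.congr' ?_ (by rfl)
    filter_upwards [hev] with θ hθ
    have hsub : ((θ, η θ) : E × H) - (θstar, η θstar) = (θ - θstar, η θ - η θstar) := by
      simp [Prod.ext_iff]
    have hLθ : L (((θ, η θ) : E × H) - (θstar, η θstar)) = Jstar (θ - θstar) := by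
      rw [hsub, hL]
      simp [horth _ hθ]
    simp only [Function.comp, hLθ]
  refine ⟨key, ?_⟩
  have hone : HasFDerivAt (fun θ : E => ((θ, η θstar) : E × H))
      ((ContinuousLinearMap.id ℝ E).prod 0) θstar :=
    (hasFDerivAt_id θstar).prodMk (hasFDerivAt_const _ _)
  have hcomp := hdiff.comp θstar hone
  convert hcomp using 1
  ext x
  simp [hL]
  ext x
  simp [hL]
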